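/- Let g_N(θ) = (sin(2πθ))^{2N}. Then there exist absolute constants c, C > 0 such that for all N sufficiently large: (a) |g_N(θ)| ≤ e^{−cN²} whenever |θ| ≤ e^{−CN}; and (b) ∫_𝕋 |g_N(θ)|² dθ ≥ c/N. -/

import Mathlib

open Real

set_option maxHeartbeats 1000000 in
/-- For `g_N(θ) = sin(2πθ)^{2N}`: (a) `|g_N(θ)| ≤ e^{-cN²}` for `|θ| ≤ e^{-CN}`, and
(b) `∫_𝕋 |g_N|² ≥ c/N`, for all sufficiently large `N`. -/
theorem stmt_9 : ∃ c > (0 : ℝ), ∃ C > (0 : ℝ), ∃ N₀ : ℕ, ∀ N ≥ N₀,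
    (∀ θ : ℝ, |θ| ≤ Real.exp (-(C * N)) →
      |Real.sin (2 * Real.pi * θ) ^ (2 * N)| ≤ Real.exp (-(c * N ^ 2))) ∧
    c / N ≤ ∫ θ in (0 : ℝ)..1, (Real.sin (2 * Real.pi * θ) ^ (2 * N)) ^ 2 := by
  refine ⟨1/8, by norm_num, 2, by norm_num, 10, fun N hN => ?_⟩
  have hNpos : (0:ℝ) < N := by positivity
  have hN10 : (10:ℝ) ≤ N := by exact_mod_cast hN
  have hpi : Real.pi < 3.15 := Real.pi_lt_d2
  have hpi0 : 0 < Real.pi := Real.pi_pos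
  constructor
  · intro θ hθ
    have h2pi : 2 * Real.pi ≤ Real.exp 2 := by
      have h := Real.exp_one_gt_d9
      have : Real.exp 2 = Real.exp 1 * Real.exp 1 := by
        rw [← Real.exp_add]; norm_num
      nlinarith [Real.exp_one_gt_d9]
    have habs : |Real.sin (2 * Real.pi * θ)| ≤ 2 * Real.pi * |θ| := by
      calc |Real.sin (2 * Real.pi * θ)| ≤ |2 * Real.pi * θ| := Real.abs_sin_le_abs
        _ = 2 * Real.pi * |θ| := by
            rw [abs_mul, abs_of_pos (by positivity : (0:ℝ) < 2 * Real.pi)]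
    have hb : |Real.sin (2 * Real.pi * θ)| ≤ Real.exp (2 - 2 * N) := by
      have : 2 * Real.pi * |θ| ≤ Real.exp 2 * Real.exp (-(2 * N)) := by
        have := abs_nonneg θ
        nlinarith [Real.exp_pos (-(2 * (N:ℝ)))]
      calc |Real.sin (2 * Real.pi * θ)| ≤ 2 * Real.pi * |θ| := habs
        _ ≤ Real.exp 2 * Real.exp (-(2 * N)) := this
        _ = Real.exp (2 - 2 * N) := by rw [← Real.exp_add]; ring_nf
    calc |Real.sin (2 * Real.pi * θ) ^ (2 * N)|
        = |Real.sin (2 * Real.pi * θ)| ^ (2 * N) := by rw [abs_pow]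
      _ ≤ Real.exp (2 - 2 * N) ^ (2 * N) :=
          pow_le_pow_left₀ (abs_nonneg _) hb _
      _ = Real.exp ((2 - 2 * N) * (2 * N)) := by
          rw [← Real.exp_nat_mul]; congr 1; push_cast; ring
      _ ≤ Real.exp (-(1/8 * N ^ 2)) := by
          apply Real.exp_le_exp.2
          nlinarith
  · -- part (b)
    set δ : ℝ := 1 / (8 * N) with hδ
    have hδpos : 0 < δ := by positivity
    have hδsmall : δ ≤ 1 / 80 := by
      rw [hδ]
      rw [div_le_div_iff₀ (by positivity) (by norm_num)]
      nlinarith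
    set η : ℝ := Real.pi / (4 * N) with hη
    have hηpos : 0 < η := by positivity
    have hηsmall : η ≤ 1 / 10 := by
      rw [hη, div_le_div_iff₀ (by positivity) (by norm_num)]
      nlinarith
    have hcont : Continuous fun θ : ℝ => Real.sin (2 * Real.pi * θ) ^ (4 * N) := by
      fun_prop
    -- pointwise lower bound on the small interval
    have hpt : ∀ θ ∈ Set.Ioc (1/4 - δ) (1/4 + δ),
        Real.cos η ^ (4 * N) ≤ Real.sin (2 * Real.pi * θ) ^ (4 * N) := by
      intro θ hθ
      obtain ⟨h1, h2⟩ := hθ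
      have hsin : Real.cos η ≤ Real.sin (2 * Real.pi * θ) := by
        have : Real.sin (2 * Real.pi * θ) = Real.cos (Real.pi/2 - 2 * Real.pi * θ) :=
          (Real.cos_pi_div_two_sub _).symm
        have habs4 : |1/4 - θ| ≤ δ := abs_le.2 ⟨by linarith, by linarith⟩
        have e2 : |Real.pi/2 - 2 * Real.pi * θ| = 2 * Real.pi * |1/4 - θ| := by
          rw [show Real.pi/2 - 2 * Real.pi * θ = 2 * Real.pi * (1/4 - θ) by ring,
            abs_mul, abs_of_pos (by positivity : (0:ℝ) < 2 * Real.pi)]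
        have e3 : |Real.pi/2 - 2 * Real.pi * θ| ≤ η := by
          rw [e2]
          have : 2 * Real.pi * |1/4 - θ| ≤ 2 * Real.pi * δ :=
            mul_le_mul_of_nonneg_left habs4 (by positivity)
          have e4 : 2 * Real.pi * δ = η := by rw [hδ, hη]; field_simp; ring
          linarith
        rw [this, ← Real.cos_abs (Real.pi/2 - 2 * Real.pi * θ)]
        apply Real.cos_le_cos_of_nonneg_of_le_pi (abs_nonneg _)
        · nlinarith [Real.pi_gt_three]
        · exact e3
      have hc0 : 0 ≤ Real.cos η := by
        apply Real.cos_nonneg_of_mem_Icc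
        refine ⟨by nlinarith, by nlinarith [Real.pi_gt_three]⟩
      exact pow_le_pow_left₀ hc0 hsin _
    have hsub : Set.Ioc (1/4 - δ : ℝ) (1/4 + δ) ⊆ Set.Ioc (0:ℝ) 1 := by
      intro x hx
      obtain ⟨h1, h2⟩ := hx
      constructor <;> nlinarith
    have hint : MeasureTheory.IntegrableOn
        (fun θ : ℝ => Real.sin (2 * Real.pi * θ) ^ (4 * N)) (Set.Ioc (0:ℝ) 1) :=
      hcont.integrableOn_Ioc
    have hnn : ∀ x : ℝ, 0 ≤ Real.sin (2 * Real.pi * x) ^ (4 * N) := fun x => by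
      have : Real.sin (2 * Real.pi * x) ^ (4 * N) =
          (Real.sin (2 * Real.pi * x) ^ 2) ^ (2 * N) := by
        rw [← pow_mul]; ring_nf
      rw [this]; positivity
    -- step 1: restrict the integral
    have step1 : (∫ θ in Set.Ioc (1/4 - δ : ℝ) (1/4 + δ),
          Real.sin (2 * Real.pi * θ) ^ (4 * N)) ≤
        ∫ θ in Set.Ioc (0:ℝ) 1, Real.sin (2 * Real.pi * θ) ^ (4 * N) := by
      apply MeasureTheory.setIntegral_mono_set hint
      · exact Filter.Eventually.of_forall fun x => hnn x
      · exact MeasureTheory.ae_of_all _ hsub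
    -- step 2: constant lower bound
    have hmeas : (MeasureTheory.volume (Set.Ioc (1/4 - δ : ℝ) (1/4 + δ))).toReal
        = 2 * δ := by
      rw [Real.volume_Ioc, ENNReal.toReal_ofReal (by linarith)]
      ring
    have step2 : Real.cos η ^ (4 * N) * (2 * δ) ≤
        ∫ θ in Set.Ioc (1/4 - δ : ℝ) (1/4 + δ),
          Real.sin (2 * Real.pi * θ) ^ (4 * N) := by
      rw [← hmeas, ← MeasureTheory.measureReal_def]
      exact MeasureTheory.setIntegral_ge_of_const_le_real measurableSet_Ioc
        (by simp [Real.volume_Ioc]) hpt (hint.mono_set hsub)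
    -- step 3: cos η ^ (4N) ≥ 1/2
    have step3 : (1/2 : ℝ) ≤ Real.cos η ^ (4 * N) := by
      have hcos : 1 - η ^ 2 / 2 ≤ Real.cos η := Real.one_sub_sq_div_two_le_cos
      have hq : (0:ℝ) ≤ 1 - η ^ 2 / 2 := by nlinarith
      have hbern : 1 + (4 * N : ℕ) * (-(η ^ 2 / 2)) ≤ (1 + (-(η ^ 2 / 2))) ^ (4 * N) :=
        one_add_mul_le_pow (by nlinarith) _
      have hpow : (1 - η ^ 2 / 2) ^ (4 * N) ≤ Real.cos η ^ (4 * N) :=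
        pow_le_pow_left₀ hq hcos _
      have hη2 : (4 * N : ℝ) * (η ^ 2 / 2) ≤ Real.pi ^ 2 / (8 * N) := by
        apply le_of_eq
        rw [hη, div_pow]
        field_simp
        ring
      have hsm : Real.pi ^ 2 / (8 * N) ≤ 1/2 := by
        rw [div_le_iff₀ (by positivity)]
        nlinarith [hpi, hpi0, hN10]
      have h4N : ((4 * N : ℕ) : ℝ) = 4 * (N:ℝ) := by push_cast; ring
      calc (1/2 : ℝ) ≤ 1 - (4 * N : ℝ) * (η ^ 2 / 2) := by nlinarith
        _ = 1 + (4 * N : ℕ) * (-(η ^ 2 / 2)) := by rw [h4N]; ring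
        _ ≤ (1 + (-(η ^ 2 / 2))) ^ (4 * N) := hbern
        _ = (1 - η ^ 2 / 2) ^ (4 * N) := by rw [← sub_eq_add_neg]
        _ ≤ Real.cos η ^ (4 * N) := hpow
    -- combine
    have hEq : (∫ θ in (0:ℝ)..1, (Real.sin (2 * Real.pi * θ) ^ (2 * N)) ^ 2)
        = ∫ θ in Set.Ioc (0:ℝ) 1, Real.sin (2 * Real.pi * θ) ^ (4 * N) := by
      rw [intervalIntegral.integral_of_le (by norm_num)]
      congr 1
      ext θ
      rw [← pow_mul]
      congr 1
      ring
    rw [hEq]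
    have : (1/8 : ℝ) / N = (1/2) * (2 * δ) := by
      rw [hδ]; field_simp
    rw [this]
    calc (1/2 : ℝ) * (2 * δ) ≤ Real.cos η ^ (4 * N) * (2 * δ) := by
          apply mul_le_mul_of_nonneg_right step3 (by linarith)
      _ ≤ _ := step1.trans' step2
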